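/- Let m, d ≥ 1 and let A ∈ ℝ^{(md)×(md)} be an invertible matrix that is block-tridiagonal, i.e., A[i][j] = 0 whenever |i−j| > 1, with ‖A[i][j]‖ ≤ a for all block indices i, j ∈ {1,…,m}. Suppose ‖((A²)^{-1})[i][j]‖ ≤ c λ^{|i−j|} for all i, j ∈ {1,…,m}, where a, c > 0 and λ ∈ (0,1). Then ‖(A^{-1})[i][j]‖ ≤ (3ac/λ) · λ^{|i−j|} for all i, j ∈ {1,…,m}. -/

import Mathlib

/-- The `(i, j)` block of an `(m*d) × (m*d)` matrix viewed as an `m × m` grid of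
`d × d` blocks. -/
def blk {m d : ℕ} (A : Matrix (Fin m × Fin d) (Fin m × Fin d) ℝ) (i j : Fin m) :
    Matrix (Fin d) (Fin d) ℝ :=
  Matrix.of fun a b => A (i, a) (j, b)

/-- The spectral (ℓ₂ operator) norm of a real `d × d` matrix. -/
noncomputable def specNorm {d : ℕ} (B : Matrix (Fin d) (Fin d) ℝ) : ℝ :=
  ‖LinearMap.toContinuousLinearMap (Matrix.toEuclideanLin B)‖

open scoped Matrix.Norms.L2Operator

lemma specNorm_eq {d : ℕ} (B : Matrix (Fin d) (Fin d) ℝ) : specNorm B = ‖B‖ :=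
  (Matrix.l2_opNorm_def B).symm

lemma blk_mul {m d : ℕ} (M N : Matrix (Fin m × Fin d) (Fin m × Fin d) ℝ) (i j : Fin m) :
    blk (M * N) i j = ∑ k : Fin m, blk M i k * blk N k j := by
  ext a b
  simp [blk, Matrix.mul_apply, Matrix.sum_apply, Fintype.sum_prod_type]

theorem stmt_11 (m d : ℕ) (hm : 1 ≤ m) (hd : 1 ≤ d)
    (A : Matrix (Fin m × Fin d) (Fin m × Fin d) ℝ) (hA : IsUnit A)
    (htri : ∀ i j : Fin m, 1 < Nat.dist i j → blk A i j = 0)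
    (a c lam : ℝ) (ha : 0 < a) (hc : 0 < c) (hlam : lam ∈ Set.Ioo (0 : ℝ) 1)
    (hbound : ∀ i j : Fin m, specNorm (blk A i j) ≤ a)
    (hsq : ∀ i j : Fin m, specNorm (blk (A ^ 2)⁻¹ i j) ≤ c * lam ^ (Nat.dist i j)) :
    ∀ i j : Fin m, specNorm (blk A⁻¹ i j) ≤ 3 * a * c / lam * lam ^ (Nat.dist i j) := by
  obtain ⟨hl0, hl1⟩ := hlam
  intro i j
  have hdet : IsUnit A.det := (Matrix.isUnit_iff_isUnit_det A).mp hA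
  have hdet2 : IsUnit (A ^ 2).det := by
    rw [Matrix.det_pow]; exact hdet.pow 2
  have hinv : A⁻¹ = (A ^ 2)⁻¹ * A := by
    refine (Matrix.inv_eq_left_inv ?_)
    calc (A ^ 2)⁻¹ * A * A = (A ^ 2)⁻¹ * A ^ 2 := by rw [mul_assoc, ← pow_two]
    _ = 1 := Matrix.nonsing_inv_mul _ hdet2
  set D := Nat.dist i j with hD
  -- bound for each k near j
  have hM : ∀ k : Fin m, Nat.dist (k : ℕ) (j : ℕ) ≤ 1 →
      ‖blk (A ^ 2)⁻¹ i k * blk A k j‖ ≤ a * c * lam ^ (D - 1) := by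
    intro k hk
    have h1 : ‖blk (A ^ 2)⁻¹ i k * blk A k j‖ ≤ ‖blk (A ^ 2)⁻¹ i k‖ * ‖blk A k j‖ :=
      norm_mul_le _ _
    have h2 : ‖blk (A ^ 2)⁻¹ i k‖ ≤ c * lam ^ (Nat.dist i k) := by
      rw [← specNorm_eq]; exact hsq i k
    have h3 : ‖blk A k j‖ ≤ a := by rw [← specNorm_eq]; exact hbound k j
    have htr : D - 1 ≤ Nat.dist (i : ℕ) (k : ℕ) := by
      have := Nat.dist.triangle_inequality (i : ℕ) (k : ℕ) (j : ℕ)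
      omega
    have h4 : lam ^ (Nat.dist (i : ℕ) (k : ℕ)) ≤ lam ^ (D - 1) :=
      pow_le_pow_of_le_one hl0.le hl1.le htr
    have h5 : ‖blk (A ^ 2)⁻¹ i k‖ * ‖blk A k j‖ ≤ (c * lam ^ (D - 1)) * a := by
      apply mul_le_mul _ h3 (norm_nonneg _) (by positivity)
      exact h2.trans (by nlinarith [pow_pos hl0 (Nat.dist (i:ℕ) (k:ℕ))])
    nlinarith
  have hzero : ∀ k : Fin m, 1 < Nat.dist (k : ℕ) (j : ℕ) →
      ‖blk (A ^ 2)⁻¹ i k * blk A k j‖ = 0 := by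
    intro k hk
    rw [htri k j hk, mul_zero, norm_zero]
  -- the set of relevant k
  have hcard : (Finset.univ.filter fun k : Fin m => Nat.dist (k : ℕ) (j : ℕ) ≤ 1).card ≤ 3 := by
    have : (Finset.univ.filter fun k : Fin m => Nat.dist (k : ℕ) (j : ℕ) ≤ 1).card ≤
        ({(j : ℕ) - 1, (j : ℕ), (j : ℕ) + 1} : Finset ℕ).card := by
      apply Finset.card_le_card_of_injOn (f := fun k : Fin m => (k : ℕ))
      · intro k hk
        simp only [Finset.coe_filter, Finset.mem_univ, true_and, Set.mem_setOf_eq] at hk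
        simp only [Finset.coe_insert, Finset.coe_singleton, Set.mem_insert_iff, Set.mem_singleton_iff]
        unfold Nat.dist at hk
        omega
      · intro x _ y _ h
        exact Fin.val_injective h
    refine this.trans ?_
    refine (Finset.card_insert_le _ _).trans ?_
    have h2 := Finset.card_insert_le ((j : ℕ)) ({(j : ℕ) + 1} : Finset ℕ)
    simp only [Finset.card_singleton] at h2 ⊢
    omega
  calc specNorm (blk A⁻¹ i j) = ‖∑ k : Fin m, blk (A ^ 2)⁻¹ i k * blk A k j‖ := by
        rw [specNorm_eq, hinv, blk_mul]
    _ ≤ ∑ k : Fin m, ‖blk (A ^ 2)⁻¹ i k * blk A k j‖ := norm_sum_le _ _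
    _ ≤ ∑ k : Fin m, if Nat.dist (k : ℕ) (j : ℕ) ≤ 1 then a * c * lam ^ (D - 1) else 0 := by
        apply Finset.sum_le_sum
        intro k _
        by_cases hk : Nat.dist (k : ℕ) (j : ℕ) ≤ 1
        · rw [if_pos hk]; exact hM k hk
        · rw [if_neg hk, hzero k (by omega)]
    _ = (Finset.univ.filter fun k : Fin m => Nat.dist (k : ℕ) (j : ℕ) ≤ 1).card •
          (a * c * lam ^ (D - 1)) := by
        rw [← Finset.sum_filter, Finset.sum_const]
    _ ≤ 3 * a * c / lam * lam ^ D := by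
        rw [nsmul_eq_mul]
        have hMnn : 0 ≤ a * c * lam ^ (D - 1) := by positivity
        have hle3 : ((Finset.univ.filter fun k : Fin m =>
            Nat.dist (k : ℕ) (j : ℕ) ≤ 1).card : ℝ) * (a * c * lam ^ (D - 1)) ≤
            3 * (a * c * lam ^ (D - 1)) := by
          apply mul_le_mul_of_nonneg_right _ hMnn
          exact_mod_cast hcard
        refine hle3.trans ?_
        have hpow : lam ^ (D - 1) ≤ lam ^ D / lam := by
          cases D with
          | zero => simp only [Nat.zero_sub, pow_zero]; rw [le_div_iff₀ hl0]; linarith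
          | succ n =>
            simp only [Nat.succ_sub_one, pow_succ]
            rw [mul_div_assoc, div_self hl0.ne', mul_one]
        have : 3 * a * c / lam * lam ^ D = 3 * (a * c * (lam ^ D / lam)) := by ring
        rw [this]
        gcongr
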